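/- A finite simple connected graph G with n vertices and at least one edge is a complete bipartite graph if and only if the spectrum of its transition matrix T consists of the eigenvalue −1 with multiplicity 1, the eigenvalue 0 with multiplicity n − 2, and the eigenvalue 1 with multiplicity 1. -/

import Mathlib

open Matrix SimpleGraph

/-- The Grover transfer matrix `U = U(G)` of a finite simple graph `G`, a `2m × 2m`
complex matrix indexed by the darts (symmetric arcs) of `G`.  For darts `e, f`,
`U e f = 2/deg(t(f)) - 1` if `f = e⁻¹`, `U e f = 2/deg(t(f))` if `t(f) = o(e)` and
`f ≠ e⁻¹`, and `U e f = 0` otherwise. -/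
noncomputable def groverMatrix {V : Type*} [Fintype V] [DecidableEq V]
    (G : SimpleGraph V) [DecidableRel G.Adj] : Matrix G.Dart G.Dart ℂ :=
  fun e f =>
    if f = e.symm then 2 / (G.degree f.snd : ℂ) - 1
    else if f.snd = e.fst then 2 / (G.degree f.snd : ℂ)
    else 0

/-- `G` induces a `k`-periodic Grover walk: `U ^ k = 1` and `U ^ j ≠ 1` for `1 ≤ j < k`. -/
def InducesPeriodicGroverWalk {V : Type*} [Fintype V] [DecidableEq V]
    (G : SimpleGraph V) [DecidableRel G.Adj] (k : ℕ) : Prop :=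
  groverMatrix G ^ k = 1 ∧ ∀ j : ℕ, 1 ≤ j → j < k → groverMatrix G ^ j ≠ 1

/-- The transition matrix of the isotropic random walk on `G`:
`T u v = 1/deg(u)` if `u ∼ v` and `0` otherwise. -/
noncomputable def transitionMatrix {V : Type*} [Fintype V]
    (G : SimpleGraph V) [DecidableRel G.Adj] : Matrix V V ℝ :=
  fun u v => if G.Adj u v then 1 / (G.degree u : ℝ) else 0

set_option linter.unusedSectionVars false
set_option synthInstance.maxHeartbeats 1000000
set_option maxHeartbeats 1600000

namespace CBaux

variable {V : Type*} [Fintype V] [DecidableEq V] (G : SimpleGraph V) [DecidableRel G.Adj]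

lemma transition_nonneg (u v : V) : 0 ≤ transitionMatrix G u v := by
  unfold transitionMatrix; split <;> positivity

variable {G}

lemma transition_pos {u v : V} (h : G.Adj u v) : 0 < transitionMatrix G u v := by
  have hd : 0 < G.degree u := (G.degree_pos_iff_exists_adj u).mpr ⟨v, h⟩
  simp only [transitionMatrix, if_pos h]
  positivity

lemma transition_eq_zero {u v : V} (h : ¬ G.Adj u v) : transitionMatrix G u v = 0 := by
  simp [transitionMatrix, h]

lemma degree_smul_transition (hd : ∀ w, 0 < G.degree w) (u v : V) :
    (G.degree u : ℝ) * transitionMatrix G u v = if G.Adj u v then 1 else 0 := by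
  have : (G.degree u : ℝ) ≠ 0 := Nat.cast_ne_zero.mpr (hd u).ne'
  unfold transitionMatrix
  split_ifs with h
  · field_simp
  · simp

lemma mulVec_apply' (M : Matrix V V ℝ) (x : V → ℝ) (u : V) :
    (M *ᵥ x) u = ∑ v, M u v * x v := rfl

/-- Weighted self-adjointness consequence: `T (T x) = 0 → T x = 0`. -/
lemma mulVec_eq_zero_of_sq (hd : ∀ w, 0 < G.degree w)
    (x : V → ℝ) (h : (transitionMatrix G).mulVec ((transitionMatrix G).mulVec x) = 0) :
    (transitionMatrix G).mulVec x = 0 := by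
  set T := transitionMatrix G with hT
  set y := T.mulVec x with hy
  set d : V → ℝ := fun u => (G.degree u : ℝ) with hdd
  have h1 : ∀ u v : V, d u * T u v = d v * T v u := by
    intro u v
    rw [hdd, hT]
    simp only [degree_smul_transition hd]
    simp [adj_comm]
  have key : ∑ u, d u * (y u * y u) = 0 := by
    calc ∑ u, d u * (y u * y u)
        = ∑ u, ∑ v, (d u * T u v) * (x v * y u) := by
          refine Finset.sum_congr rfl fun u _ => ?_
          have : y u = ∑ v, T u v * x v := mulVec_apply' T x u
          rw [this]; rw [Finset.sum_mul, Finset.mul_sum]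
          exact Finset.sum_congr rfl fun v _ => by ring
      _ = ∑ u, ∑ v, (d v * T v u) * (x v * y u) := by
          exact Finset.sum_congr rfl fun u _ => Finset.sum_congr rfl fun v _ => by rw [h1]
      _ = ∑ v, ∑ u, (d v * T v u) * (x v * y u) := Finset.sum_comm
      _ = ∑ v, (d v * x v) * ∑ u, T v u * y u := by
          refine Finset.sum_congr rfl fun v _ => ?_
          rw [Finset.mul_sum]
          exact Finset.sum_congr rfl fun u _ => by ring
      _ = 0 := by
          refine Finset.sum_eq_zero fun v _ => ?_
          have : ∑ u, T v u * y u = (T *ᵥ y) v := (mulVec_apply' T y v).symm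
          rw [this, h]
          simp
  have hnn : ∀ u ∈ Finset.univ, 0 ≤ d u * (y u * y u) := by
    intro u _
    have : (0:ℝ) ≤ d u := Nat.cast_nonneg _
    nlinarith [sq_nonneg (y u)]
  have := (Finset.sum_eq_zero_iff_of_nonneg hnn).mp key
  funext u
  have h2 := this u (Finset.mem_univ u)
  have hdu : (0:ℝ) < d u := by simp only [hdd]; exact_mod_cast hd u
  have : y u * y u = 0 := by
    rcases mul_eq_zero.mp h2 with h' | h'
    · exact absurd h' hdu.ne'
    · exact h'
  have := mul_self_eq_zero.mp this
  simpa using this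

end CBaux

namespace CBaux
open Polynomial

variable {V : Type*} [Fintype V] [DecidableEq V] {G : SimpleGraph V} [DecidableRel G.Adj]

lemma mulVec_pow_eq_zero (hd : ∀ w, 0 < G.degree w) :
    ∀ (k : ℕ) (x : V → ℝ), ((transitionMatrix G) ^ (k+1)).mulVec x = 0 →
      (transitionMatrix G).mulVec x = 0 := by
  intro k
  induction k with
  | zero => intro x hx; simpa using hx
  | succ k ih =>
      intro x hx
      set T := transitionMatrix G
      have e : T ^ (k+1+1) = (T * T) * (T ^ k) := by
        rw [pow_succ', pow_succ', ← mul_assoc]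
      have h2 : (T * T) *ᵥ ((T ^ k) *ᵥ x) = 0 := by
        rw [Matrix.mulVec_mulVec, ← e]; exact hx
      have h3 : T *ᵥ ((T ^ k) *ᵥ x) = 0 := by
        apply mulVec_eq_zero_of_sq hd
        rw [← Matrix.mulVec_mulVec] at h2
        exact h2
      apply ih
      rw [pow_succ', ← Matrix.mulVec_mulVec]
      exact h3

lemma cube_eq_self (hd : ∀ w, 0 < G.degree w) (hn : 2 ≤ Fintype.card V)
    (hcp : (transitionMatrix G).charpoly =
      (X - C (-1)) * (X - C 1) * X ^ (Fintype.card V - 2)) :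
    transitionMatrix G * transitionMatrix G * transitionMatrix G = transitionMatrix G := by
  set T := transitionMatrix G with hT
  have hCH := Matrix.aeval_self_charpoly T
  rw [hcp] at hCH
  have hval : ((T + 1) * (T - 1)) * T ^ (Fintype.card V - 2) = 0 := by
    simp only [_root_.map_mul, map_pow, map_sub, aeval_X, aeval_C, _root_.map_neg,
      _root_.map_one, map_add, sub_neg_eq_add] at hCH
    exact hCH
  have hval2 : (T * T - 1) * T ^ (Fintype.card V - 2) = 0 := by
    have e : (T + 1) * (T - 1) = T * T - 1 := by noncomm_ring
    rwa [e] at hval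
  rcases Nat.lt_or_ge 2 (Fintype.card V) with h3 | h2
  · -- card ≥ 3
    obtain ⟨m, hm⟩ : ∃ m, Fintype.card V - 2 = m + 1 :=
      ⟨Fintype.card V - 3, by omega⟩
    have c1 : Commute T (T * T - 1) :=
      Commute.sub_right ((Commute.refl T).mul_right (Commute.refl T)) (Commute.one_right T)
    have hcomm : T ^ (m+1) * (T * T - 1) = (T * T - 1) * T ^ (m+1) :=
      ((c1.symm).pow_right (m+1)).eq.symm
    have hz : T ^ (m+1) * (T * T - 1) = 0 := by
      rw [hcomm, ← hm, hval2]
    have hzero : ∀ x : V → ℝ, (T * T * T - T).mulVec x = 0 := by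
      intro x
      have h1 : (T ^ (m+1)).mulVec ((T * T - 1).mulVec x) = 0 := by
        rw [Matrix.mulVec_mulVec, hz, Matrix.zero_mulVec]
      have h2 := mulVec_pow_eq_zero hd m _ h1
      rw [Matrix.mulVec_mulVec] at h2
      have e : T * (T * T - 1) = T * T * T - T := by noncomm_ring
      rwa [e] at h2
    have hsub : T * T * T - T = 0 := by
      ext i j
      have := congrFun (hzero (Pi.single j 1)) i
      rw [Matrix.mulVec_single_one] at this
      simpa using this
    exact sub_eq_zero.mp hsub
  · -- card = 2
    have h0 : Fintype.card V - 2 = 0 := by omega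
    rw [h0, pow_zero, mul_one] at hval2
    have h1 : T * T = 1 := sub_eq_zero.mp hval2
    rw [h1, one_mul]

end CBaux

namespace CBaux

variable {V : Type*} [Fintype V] [DecidableEq V] {G : SimpleGraph V} [DecidableRel G.Adj]

lemma no_three_walk
    (hcube : transitionMatrix G * transitionMatrix G * transitionMatrix G = transitionMatrix G)
    {u v a b : V} (huv : ¬ G.Adj u v) (h1 : G.Adj u a) (h2 : G.Adj a b) (h3 : G.Adj b v) :
    False := by
  set T := transitionMatrix G with hT
  have hzero : ∑ j, (∑ i, T u i * T i j) * T j v = 0 := by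
    have e1 : (T * T * T) u v = ∑ j, (T * T) u j * T j v := Matrix.mul_apply
    have e2 : ∀ j, (T * T) u j = ∑ i, T u i * T i j := fun j => Matrix.mul_apply
    calc ∑ j, (∑ i, T u i * T i j) * T j v
        = ∑ j, (T * T) u j * T j v := by
          exact Finset.sum_congr rfl fun j _ => by rw [e2]
      _ = (T * T * T) u v := e1.symm
      _ = T u v := by rw [hcube]
      _ = 0 := transition_eq_zero huv
  have hpos : 0 < ∑ j, (∑ i, T u i * T i j) * T j v := by
    apply Finset.sum_pos'
    · intro j _
      apply mul_nonneg
      · exact Finset.sum_nonneg fun i _ =>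
          mul_nonneg (transition_nonneg G u i) (transition_nonneg G i j)
      · exact transition_nonneg G j v
    · refine ⟨b, Finset.mem_univ b, ?_⟩
      apply mul_pos
      · apply Finset.sum_pos'
        · intro i _
          exact mul_nonneg (transition_nonneg G u i) (transition_nonneg G i b)
        · exact ⟨a, Finset.mem_univ a, mul_pos (transition_pos h1) (transition_pos h2)⟩
      · exact transition_pos h3
  rw [hzero] at hpos
  exact lt_irrefl 0 hpos

lemma no_triangle
    (hcube : transitionMatrix G * transitionMatrix G * transitionMatrix G = transitionMatrix G)
    {a b c : V} (h1 : G.Adj a b) (h2 : G.Adj b c) (h3 : G.Adj c a) : False :=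
  no_three_walk hcube (G.loopless.irrefl a) h1 h2 h3

lemma trichotomy
    (hcube : transitionMatrix G * transitionMatrix G * transitionMatrix G = transitionMatrix G)
    {u v : V} (p : G.Walk u v) :
    G.Adj u v ∨ u = v ∨ ∃ z, G.Adj u z ∧ G.Adj z v := by
  induction p with
  | nil => right; left; rfl
  | @cons u a v h q ih =>
      rcases ih with hav | rfl | ⟨z, haz, hzv⟩
      · right; right; exact ⟨a, h, hav⟩
      · left; exact h
      · by_cases huv : G.Adj u v
        · left; exact huv
        · exact absurd (no_three_walk hcube huv h haz hzv) not_false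

lemma adj_of_not_adj (hconn : G.Connected)
    (hcube : transitionMatrix G * transitionMatrix G * transitionMatrix G = transitionMatrix G)
    {u v w : V} (huv : ¬ G.Adj u v) (hne : u ≠ v) (hw : G.Adj u w) : G.Adj v w := by
  obtain ⟨p⟩ := hconn.preconnected u v
  rcases trichotomy hcube p with h | rfl | ⟨z, huz, hzv⟩
  · exact absurd h huv
  · exact absurd rfl hne
  · by_contra hvw
    exact no_three_walk hcube hvw hzv.symm huz.symm hw

end CBaux

namespace CBaux

variable {V : Type*} [Fintype V] [DecidableEq V] {G : SimpleGraph V} [DecidableRel G.Adj]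

lemma exists_completeBipartite (hconn : G.Connected)
    (hcube : transitionMatrix G * transitionMatrix G * transitionMatrix G = transitionMatrix G)
    {a b : V} (hab : G.Adj a b) :
    ∃ r s : ℕ, 0 < r ∧ 0 < s ∧
      Nonempty (G ≃g completeBipartiteGraph (Fin r) (Fin s)) := by
  have F1 : ∀ v, ¬ G.Adj b v ↔ G.Adj a v := by
    intro v
    constructor
    · intro hbv
      by_cases hva : v = a
      · subst hva; exact absurd hab.symm hbv
      by_cases hvb : v = b
      · subst hvb; exact hab
      by_contra hav
      have hvb' := adj_of_not_adj hconn hcube hav (fun h => hva h.symm) hab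
      exact hbv hvb'.symm
    · intro hav hbv
      exact no_triangle hcube hab hbv hav.symm
  have F3 : ∀ u v, G.Adj b u → G.Adj a v → G.Adj u v := by
    intro u v hbu hav
    by_cases hua : u = a
    · subst hua; exact hav
    · have hnua : ¬ G.Adj a u := fun h => no_triangle hcube h hbu.symm hab.symm
      exact adj_of_not_adj hconn hcube hnua (fun h => hua h.symm) hav
  have F2 : ∀ u v, G.Adj u v ↔ ((G.Adj b u ∧ ¬ G.Adj b v) ∨ (¬ G.Adj b u ∧ G.Adj b v)) := by
    intro u v
    constructor
    · intro huv
      by_cases hbu : G.Adj b u <;> by_cases hbv : G.Adj b v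
      · exact absurd (no_triangle hcube hbu huv hbv.symm) not_false
      · exact Or.inl ⟨hbu, hbv⟩
      · exact Or.inr ⟨hbu, hbv⟩
      · have hau := (F1 u).mp hbu
        have hav := (F1 v).mp hbv
        exact absurd (no_triangle hcube hau huv hav.symm) not_false
    · rintro (⟨hbu, hbv⟩ | ⟨hbu, hbv⟩)
      · exact F3 u v hbu ((F1 v).mp hbv)
      · exact (F3 v u hbv ((F1 u).mp hbu)).symm
  classical
  set r := Fintype.card {v // G.Adj b v} with hr
  set s := Fintype.card {v // ¬ G.Adj b v} with hs
  let e : V ≃ (Fin r ⊕ Fin s) :=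
    (Equiv.sumCompl (fun v => G.Adj b v)).symm.trans
      (Equiv.sumCongr (Fintype.equivFin _) (Fintype.equivFin _))
  have he1 : ∀ v, G.Adj b v → (e v).isLeft = true := by
    intro v h
    show ((Equiv.sumCongr _ _) ((Equiv.sumCompl _).symm v)).isLeft = true
    rw [Equiv.sumCompl_symm_apply_of_pos h]
    rfl
  have he2 : ∀ v, ¬ G.Adj b v → (e v).isRight = true := by
    intro v h
    show ((Equiv.sumCongr _ _) ((Equiv.sumCompl _).symm v)).isRight = true
    rw [Equiv.sumCompl_symm_apply_of_neg h]
    rfl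
  refine ⟨r, s, ?_, ?_, ⟨⟨e, ?_⟩⟩⟩
  · exact Fintype.card_pos_iff.mpr ⟨⟨a, hab.symm⟩⟩
  · exact Fintype.card_pos_iff.mpr ⟨⟨b, fun h => G.loopless.irrefl b h⟩⟩
  · intro u v
    simp only [completeBipartiteGraph_adj]
    rw [F2 u v]
    constructor
    · rintro (⟨hl, hrr⟩ | ⟨hrr, hl⟩)
      · left
        constructor
        · by_contra hbu
          have := he2 u hbu
          rw [Sum.isRight_iff] at this
          obtain ⟨j, hj⟩ := this
          rw [hj] at hl; simp at hl
        · by_contra hbv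
          have := he1 v hbv
          rw [Sum.isLeft_iff] at this
          obtain ⟨j, hj⟩ := this
          rw [hj] at hrr; simp at hrr
      · right
        constructor
        · by_contra hbu
          have := he1 u hbu
          rw [Sum.isLeft_iff] at this
          obtain ⟨j, hj⟩ := this
          rw [hj] at hrr; simp at hrr
        · by_contra hbv
          have := he2 v hbv
          rw [Sum.isRight_iff] at this
          obtain ⟨j, hj⟩ := this
          rw [hj] at hl; simp at hl
    · rintro (⟨hbu, hbv⟩ | ⟨hbu, hbv⟩)
      · exact Or.inl ⟨he1 u hbu, he2 v hbv⟩
      · exact Or.inr ⟨he2 u hbu, he1 v hbv⟩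

end CBaux

namespace CBaux

variable {V : Type*} [Fintype V] [DecidableEq V] {G : SimpleGraph V} [DecidableRel G.Adj]

lemma degree_pos_of_connected (hconn : G.Connected) {a b : V} (hab : G.Adj a b) (v : V) :
    0 < G.degree v := by
  rw [G.degree_pos_iff_exists_adj]
  by_cases h : v = a
  · subst h; exact ⟨b, hab⟩
  · obtain ⟨p⟩ := hconn.preconnected v a
    cases p with
    | nil => exact absurd rfl h
    | cons hadj q => exact ⟨_, hadj⟩

lemma degree_eq_of_iso {W : Type*} [Fintype W] [DecidableEq W] {H : SimpleGraph W}
    [DecidableRel H.Adj] (f : G ≃g H) (v : V) : G.degree v = H.degree (f v) := by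
  rw [← SimpleGraph.card_neighborSet_eq_degree, ← SimpleGraph.card_neighborSet_eq_degree]
  exact Fintype.card_congr (f.mapNeighborSet v)

lemma transition_reindex {W : Type*} [Fintype W] [DecidableEq W] {H : SimpleGraph W}
    [DecidableRel H.Adj] (f : G ≃g H) :
    Matrix.reindex f.toEquiv f.toEquiv (transitionMatrix G) = transitionMatrix H := by
  ext x y
  have hadj : G.Adj (f.toEquiv.symm x) (f.toEquiv.symm y) ↔ H.Adj x y := f.symm.map_rel_iff
  have hdeg : G.degree (f.toEquiv.symm x) = H.degree x := by
    rw [show f.toEquiv.symm x = f.symm x from rfl, degree_eq_of_iso f (f.symm x),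
      RelIso.apply_symm_apply]
  simp only [Matrix.reindex_apply, Matrix.submatrix_apply, transitionMatrix]
  rw [hdeg]
  exact if_congr hadj rfl rfl

lemma charpoly_eq_of_iso {W : Type*} [Fintype W] [DecidableEq W] {H : SimpleGraph W}
    [DecidableRel H.Adj] (f : G ≃g H) :
    (transitionMatrix G).charpoly = (transitionMatrix H).charpoly := by
  rw [← transition_reindex f, Matrix.charpoly_reindex]

instance instDecCBG {α β : Type*} : DecidableRel (completeBipartiteGraph α β).Adj :=
  fun v w => inferInstanceAs (Decidable (v.isLeft ∧ w.isRight ∨ v.isRight ∧ w.isLeft))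

lemma cbg_degree_inl {r s : ℕ} (i : Fin r) :
    (completeBipartiteGraph (Fin r) (Fin s)).degree (Sum.inl i) = s := by
  rw [← SimpleGraph.card_neighborFinset_eq_degree]
  have : (completeBipartiteGraph (Fin r) (Fin s)).neighborFinset (Sum.inl i)
      = Finset.univ.image Sum.inr := by
    ext w
    simp only [SimpleGraph.mem_neighborFinset, completeBipartiteGraph_adj, Finset.mem_image,
      Finset.mem_univ, true_and]
    cases w <;> simp
  rw [this, Finset.card_image_of_injective _ Sum.inr_injective, Finset.card_univ,
    Fintype.card_fin]

lemma cbg_degree_inr {r s : ℕ} (j : Fin s) :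
    (completeBipartiteGraph (Fin r) (Fin s)).degree (Sum.inr j) = r := by
  rw [← SimpleGraph.card_neighborFinset_eq_degree]
  have : (completeBipartiteGraph (Fin r) (Fin s)).neighborFinset (Sum.inr j)
      = Finset.univ.image Sum.inl := by
    ext w
    simp only [SimpleGraph.mem_neighborFinset, completeBipartiteGraph_adj, Finset.mem_image,
      Finset.mem_univ, true_and]
    cases w <;> simp
  rw [this, Finset.card_image_of_injective _ Sum.inl_injective, Finset.card_univ,
    Fintype.card_fin]

end CBaux

namespace CBaux
open Polynomial

lemma cbg_charpoly (r s : ℕ) (hr : 0 < r) (hs : 0 < s) :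
    (transitionMatrix (completeBipartiteGraph (Fin r) (Fin s))).charpoly =
      (X - C (-1)) * (X - C 1) * X ^ (r + s - 2) := by
  set K := completeBipartiteGraph (Fin r) (Fin s) with hK
  set T := transitionMatrix K with hT
  set φ : ℝ[X] →+* RatFunc ℝ := (algebraMap ℝ[X] (RatFunc ℝ) : ℝ[X] →+* RatFunc ℝ) with hφ
  set ψ : ℝ →+* RatFunc ℝ := (algebraMap ℝ (RatFunc ℝ) : ℝ →+* RatFunc ℝ) with hψ
  have hphiC : ∀ a : ℝ, φ (C a) = ψ a := by
    intro a
    rw [hφ, hψ, IsScalarTower.algebraMap_apply ℝ ℝ[X] (RatFunc ℝ), Polynomial.algebraMap_eq]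
  set x : RatFunc ℝ := φ X with hx'
  have hxne : x ≠ 0 := by
    rw [hx']
    intro h
    have := RatFunc.algebraMap_injective ℝ (h.trans (map_zero φ).symm)
    exact Polynomial.X_ne_zero this
  haveI : CharZero (RatFunc ℝ) :=
    charZero_of_injective_algebraMap (algebraMap ℝ (RatFunc ℝ)).injective
  have hsne : ((s : RatFunc ℝ)) ≠ 0 := Nat.cast_ne_zero.mpr hs.ne'
  have hrne : ((r : RatFunc ℝ)) ≠ 0 := Nat.cast_ne_zero.mpr hr.ne'
  -- the rank-2 factorization
  set U : Matrix (Fin r ⊕ Fin s) (Fin 2) (RatFunc ℝ) :=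
    (fun v j => if v.isLeft then (if j = 0 then 1 else 0)
      else (if j = 1 then 1 else 0)) with hU
  set W : Matrix (Fin 2) (Fin r ⊕ Fin s) (RatFunc ℝ) :=
    (fun j w => if j = 0 then (if w.isRight then (s:RatFunc ℝ)⁻¹ else 0)
      else (if w.isLeft then (r:RatFunc ℝ)⁻¹ else 0)) with hW
  have hA : T.map (fun a => ψ a) = U * W := by
    ext v w
    rw [Matrix.map_apply, Matrix.mul_apply, Fin.sum_univ_two]
    rcases v with i | j <;> rcases w with i' | j'
    · have hadj : ¬ K.Adj (Sum.inl i) (Sum.inl i') := by simp [hK]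
      rw [hT, transition_eq_zero hadj]
      simp [hU, hW]
    · have hadj : K.Adj (Sum.inl i) (Sum.inr j') := by simp [hK]
      have he : T (Sum.inl i) (Sum.inr j') = 1 / (s : ℝ) := by
        rw [hT]
        show (if _ then _ else _) = _
        rw [if_pos hadj, cbg_degree_inl]
      rw [he]
      simp [hU, hW, one_div, map_inv₀, map_natCast]
    · have hadj : K.Adj (Sum.inr j) (Sum.inl i') := by simp [hK]
      have he : T (Sum.inr j) (Sum.inl i') = 1 / (r : ℝ) := by
        rw [hT]
        show (if _ then _ else _) = _
        rw [if_pos hadj, cbg_degree_inr]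
      rw [he]
      simp [hU, hW, one_div, map_inv₀, map_natCast]
    · have hadj : ¬ K.Adj (Sum.inr j) (Sum.inr j') := by simp [hK]
      rw [hT, transition_eq_zero hadj]
      simp [hU, hW]
  have hWU : W * U = Matrix.of ![![(0:RatFunc ℝ), 1], ![1, 0]] := by
    ext j j'
    rw [Matrix.mul_apply, Fintype.sum_sum_type]
    fin_cases j <;> fin_cases j' <;>
      simp [hU, hW, Finset.sum_const, Finset.card_univ, nsmul_eq_mul,
        mul_inv_cancel₀ hsne, mul_inv_cancel₀ hrne]
  have hcm : (Matrix.charmatrix T).map (⇑φ)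
      = x • (1 : Matrix (Fin r ⊕ Fin s) (Fin r ⊕ Fin s) (RatFunc ℝ)) - U * W := by
    rw [← hA]
    ext i j
    by_cases h : i = j
    · subst h
      rw [Matrix.map_apply, Matrix.charmatrix_apply_eq, Matrix.sub_apply, Matrix.smul_apply,
        Matrix.one_apply_eq, Matrix.map_apply, map_sub, hphiC, smul_eq_mul, mul_one, hx']
    · rw [Matrix.map_apply, Matrix.charmatrix_apply_ne T i j h, Matrix.sub_apply, Matrix.smul_apply,
        Matrix.one_apply_ne h, Matrix.map_apply, map_neg, hphiC, smul_eq_mul, mul_zero, zero_sub]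
  have hdet1 : φ T.charpoly
      = (x • (1 : Matrix (Fin r ⊕ Fin s) (Fin r ⊕ Fin s) (RatFunc ℝ)) - U * W).det := by
    rw [Matrix.charpoly, RingHom.map_det, RingHom.mapMatrix_apply, hcm]
  have e1 : x • (1 : Matrix (Fin r ⊕ Fin s) (Fin r ⊕ Fin s) (RatFunc ℝ)) - U * W
      = x • ((1 : Matrix (Fin r ⊕ Fin s) (Fin r ⊕ Fin s) (RatFunc ℝ)) - (x⁻¹ • U) * W) := by
    rw [smul_sub, Matrix.smul_mul, smul_smul, mul_inv_cancel₀ hxne, one_smul]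
  have e3 : (1 : Matrix (Fin 2) (Fin 2) (RatFunc ℝ)) - W * (x⁻¹ • U)
      = Matrix.of ![![1, -x⁻¹], ![-x⁻¹, 1]] := by
    rw [Matrix.mul_smul, hWU]
    ext i j
    fin_cases i <;> fin_cases j <;> simp [Matrix.one_apply]
  have hcard : Fintype.card (Fin r ⊕ Fin s) = r + s := by
    rw [Fintype.card_sum, Fintype.card_fin, Fintype.card_fin]
  have hfinal : φ T.charpoly = x ^ (r + s) * (1 - x⁻¹ * x⁻¹) := by
    rw [hdet1, e1, Matrix.det_smul, hcard, Matrix.det_one_sub_mul_comm, e3,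
      Matrix.det_fin_two_of]
    ring
  have hRHS : φ ((X - C (-1)) * (X - C 1) * X ^ (r + s - 2))
      = (x + 1) * (x - 1) * x ^ (r + s - 2) := by
    simp only [_root_.map_mul, map_pow, map_sub, hphiC, _root_.map_neg, _root_.map_one, map_add, ← hx',
      sub_neg_eq_add]
  have hid : x ^ (r + s) * (1 - x⁻¹ * x⁻¹) = (x + 1) * (x - 1) * x ^ (r + s - 2) := by
    have hn2 : r + s = (r + s - 2) + 2 := by omega
    rw [hn2]
    have hxx : x * x⁻¹ = 1 := mul_inv_cancel₀ hxne
    field_simp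
    rw [Nat.add_sub_cancel]
    ring
  apply RatFunc.algebraMap_injective ℝ
  show φ _ = φ _
  rw [hfinal, hRHS, hid]

end CBaux


open Polynomial in
/-- **Lemma 4.3.** A finite simple connected graph `G` with at least one
edge is a complete bipartite graph iff the spectrum of its transition matrix `T`
consists of `-1` with multiplicity `1`, `0` with multiplicity `n - 2`, and `1` with
multiplicity `1`.  Since `T` is diagonalizable, this spectral condition (with
multiplicities) is expressed by its characteristic polynomial. -/
theorem completeBipartite_iff_transition_charpoly {V : Type*} [Fintype V] [DecidableEq V]
    (G : SimpleGraph V) [DecidableRel G.Adj] (hG : G.Connected)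
    (hne : G.edgeSet.Nonempty) :
    (∃ r s : ℕ, 0 < r ∧ 0 < s ∧
        Nonempty (G ≃g completeBipartiteGraph (Fin r) (Fin s))) ↔
      (transitionMatrix G).charpoly =
        (X - C (-1)) * (X - C 1) * X ^ (Fintype.card V - 2) := by
  constructor
  · rintro ⟨r, s, hr, hs, ⟨f⟩⟩
    have hcard : Fintype.card V = Fintype.card (Fin r ⊕ Fin s) := f.card_eq
    rw [CBaux.charpoly_eq_of_iso f, CBaux.cbg_charpoly r s hr hs, hcard, Fintype.card_sum,
      Fintype.card_fin, Fintype.card_fin]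
  · intro hcp
    obtain ⟨e, he⟩ := hne
    obtain ⟨a, b, hab⟩ : ∃ a b, G.Adj a b := by
      revert he
      refine Sym2.ind (fun a b he => ?_) e
      exact ⟨a, b, G.mem_edgeSet.mp he⟩
    have hn : 2 ≤ Fintype.card V :=
      Fintype.one_lt_card_iff_nontrivial.mpr ⟨⟨a, b, hab.ne⟩⟩
    have hd : ∀ w, 0 < G.degree w := CBaux.degree_pos_of_connected hG hab
    have hcube := CBaux.cube_eq_self hd hn hcp
    exact CBaux.exists_completeBipartite hG hcube hab
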